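/- Let A be the quotient of the free graded associative ℚ-algebra on generators x̄₁ (degree 2l−1, odd) and ȳ₁ (degree 2l−2, even) by the relations ȳ₁x̄₁x̄₁ = x̄₁x̄₁ȳ₁ and x̄₁ȳ₁ȳ₁ + ȳ₁ȳ₁x̄₁ = 2ȳ₁x̄₁ȳ₁. Then in A the elements x̄₁ and ȳ₁ do not commute; in particular A is not graded-commutative. -/

import Mathlib

namespace PontrjaginRings

noncomputable section

/-- Free associative ℚ-algebra on the generators `x̄₁` (degree `2l-1`, odd) and
`ȳ₁` (degree `2l-2`, even). -/
abbrev FA : Type := FreeAlgebra ℚ (Fin 2)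

/-- The generator `x̄₁`. -/
def Xg : FA := FreeAlgebra.ι ℚ 0

/-- The generator `ȳ₁`. -/
def Yg : FA := FreeAlgebra.ι ℚ 1

/-- The defining relations of the Pontrjagin ring of `Ω(LS^{2l})`:
`ȳ₁x̄₁x̄₁ = x̄₁x̄₁ȳ₁` and `x̄₁ȳ₁ȳ₁ + ȳ₁ȳ₁x̄₁ = 2ȳ₁x̄₁ȳ₁`. -/
inductive RelA : FA → FA → Prop
  | yxx : RelA (Yg * Xg * Xg) (Xg * Xg * Yg)
  | xyy : RelA (Xg * Yg * Yg + Yg * Yg * Xg) (2 * (Yg * Xg * Yg))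

/-- The Pontrjagin ring `A = H_•(Ω(LS^{2l});ℚ)` as a presented algebra. -/
abbrev AlgA : Type := RingQuot RelA

/-- The class of `x̄₁` in `A`. -/
def xA : AlgA := RingQuot.mkAlgHom ℚ RelA Xg

/-- The class of `ȳ₁` in `A`. -/
def yA : AlgA := RingQuot.mkAlgHom ℚ RelA Yg

/-- Free associative ℚ-algebra on `ā₁` (degree `2l-1`, odd), `β̄₁` (degree
`2l-2`, even) and `β̄₂` (degree `4l-3`, odd). -/
abbrev FB : Type := FreeAlgebra ℚ (Fin 3)

/-- The generator `ā₁`. -/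
def Ag : FB := FreeAlgebra.ι ℚ 0

/-- The generator `β̄₁`. -/
def B1g : FB := FreeAlgebra.ι ℚ 1

/-- The generator `β̄₂`. -/
def B2g : FB := FreeAlgebra.ι ℚ 2

/-- Defining relations of the graded tensor product `T(ā₁) ⊗ Λ(β̄₁,β̄₂)`
(with Koszul signs: `ā₁` and `β̄₂` are odd, `β̄₁` is even, `β̄₂² = 0`,
and `ā₁` is otherwise free). -/
inductive RelB : FB → FB → Prop
  | ab1 : RelB (Ag * B1g) (B1g * Ag)
  | ab2 : RelB (Ag * B2g) (-(B2g * Ag))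
  | b1b2 : RelB (B1g * B2g) (B2g * B1g)
  | b2b2 : RelB (B2g * B2g) 0

/-- The Pontrjagin ring `B = H_•(Ω(S^{2l}×ΩS^{2l});ℚ) = T(ā₁) ⊗ Λ(β̄₁,β̄₂)`. -/
abbrev AlgB : Type := RingQuot RelB

/-- The class of `ā₁` in `B`. -/
def aB : AlgB := RingQuot.mkAlgHom ℚ RelB Ag

/-- The class of `β̄₁` in `B`. -/
def b1B : AlgB := RingQuot.mkAlgHom ℚ RelB B1g

/-- The class of `β̄₂` in `B`. -/
def b2B : AlgB := RingQuot.mkAlgHom ℚ RelB B2g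

/-- Matrix image of `x̄₁`: the elementary matrix `E₁₂`. -/
def M1 : Matrix (Fin 3) (Fin 3) ℚ := !![0,1,0; 0,0,0; 0,0,0]

/-- Matrix image of `ȳ₁`: the elementary matrix `E₂₃`. -/
def M2 : Matrix (Fin 3) (Fin 3) ℚ := !![0,0,0; 0,0,1; 0,0,0]

/-- The algebra map from the free algebra to matrices. -/
def fMat : FA →ₐ[ℚ] Matrix (Fin 3) (Fin 3) ℚ :=
  FreeAlgebra.lift ℚ ![M1, M2]

lemma fMat_X : fMat Xg = M1 := by simp [fMat, Xg]

lemma fMat_Y : fMat Yg = M2 := by simp [fMat, Yg]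

lemma M1M1 : M1 * M1 = 0 := by
  norm_num [M1, ← Matrix.ext_iff, Fin.forall_fin_succ, Matrix.mul_fin_three]

lemma M2M2 : M2 * M2 = 0 := by
  norm_num [M2, ← Matrix.ext_iff, Fin.forall_fin_succ, Matrix.mul_fin_three]

lemma M2M1 : M2 * M1 = 0 := by
  norm_num [M1, M2, ← Matrix.ext_iff, Fin.forall_fin_succ, Matrix.mul_fin_three]

lemma fMat_rel : ∀ ⦃a b : FA⦄, RelA a b → fMat a = fMat b := by
  intro a b h
  cases h <;>
    simp only [map_mul, map_add, map_ofNat, fMat_X, fMat_Y, mul_assoc] <;>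
    simp [M1M1, M2M2, M2M1, ← mul_assoc]

/-- The induced map on the quotient. -/
def FMat : AlgA →ₐ[ℚ] Matrix (Fin 3) (Fin 3) ℚ :=
  RingQuot.liftAlgHom ℚ ⟨fMat, fMat_rel⟩

/-- In the quotient `A` of the free graded associative ℚ-algebra on `x̄₁`
(odd, degree `2l-1`) and `ȳ₁` (even, degree `2l-2`) by the relations
`ȳ₁x̄₁x̄₁ = x̄₁x̄₁ȳ₁` and `x̄₁ȳ₁ȳ₁ + ȳ₁ȳ₁x̄₁ = 2ȳ₁x̄₁ȳ₁`, the elements `x̄₁` and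
`ȳ₁` do not commute; in particular `A` is not graded-commutative (as `x̄₁` is
odd and `ȳ₁` even, graded commutativity would force `x̄₁ȳ₁ = ȳ₁x̄₁`). -/

theorem xA_yA_not_commute : xA * yA ≠ yA * xA := by
  intro h
  have h2 := congrArg FMat h
  simp only [map_mul, xA, yA, FMat, RingQuot.liftAlgHom_mkAlgHom_apply, fMat_X, fMat_Y] at h2
  have : (M1 * M2) 0 2 = (M2 * M1) 0 2 := by rw [h2]
  norm_num [M1, M2, Matrix.mul_fin_three, Matrix.cons_val_two, Matrix.tail_cons, Matrix.head_cons] at this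

end

end PontrjaginRings
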